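/- Kolmogorov complexity is total but uncomputable: for every s : ℕ, K(s) < ⊤ (witnessed by the constant code Nat.Partrec.Code.const s, which satisfies (Nat.Partrec.Code.const s).eval 0 = Part.some s), and there is no computable function f : ℕ → ℕ such that f s = (K(s)).toNat for all s; equivalently, ¬ Computable (fun s => (K(s)).toNat). -/

import Mathlib

/-- Program length: the size in bits of the encoding of a partial recursive code. -/
def progLen (c : Nat.Partrec.Code) : ℕ := Nat.size (Encodable.encode c)

open Classical in
/-- Score of a single (possibly undefined) output `o` on input `x` under scoring function `σ`:
`σ x y` if `o = Part.some y`, and `0` if `o` is the undefined computation. -/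
noncomputable def outScore (σ : ℕ → ℕ → ℝ) (x : ℕ) (o : Part ℕ) : ℝ :=
  if h : o.Dom then σ x (o.get h) else 0

/-- Score of a code `c` on the task `(p, σ)`. -/
noncomputable def score (p : PMF ℕ) (σ : ℕ → ℕ → ℝ) (c : Nat.Partrec.Code) : ℝ :=
  ∑' x : ℕ, (p x).toReal * outScore σ x (c.eval x)

/-- Conditional score of a code `c` on the task `(p, σ)`, conditioned on `m`. -/
noncomputable def condScore (p : PMF ℕ) (σ : ℕ → ℕ → ℝ) (c : Nat.Partrec.Code) (m : ℕ) : ℝ :=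
  ∑' x : ℕ, (p x).toReal * outScore σ x (c.eval (Nat.pair m x))

/-- Task complexity at performance `α`. -/
noncomputable def taskComplexity (p : PMF ℕ) (σ : ℕ → ℕ → ℝ) (α : ℝ) : ℕ∞ :=
  sInf { n : ℕ∞ | ∃ c : Nat.Partrec.Code, score p σ c ≥ α ∧ n = (progLen c : ℕ∞) }

/-- Conditional task complexity at performance `α`, conditioned on `m`. -/
noncomputable def condTaskComplexity (p : PMF ℕ) (σ : ℕ → ℕ → ℝ) (α : ℝ) (m : ℕ) : ℕ∞ :=
  sInf { n : ℕ∞ | ∃ c : Nat.Partrec.Code, condScore p σ c m ≥ α ∧ n = (progLen c : ℕ∞) }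

/-- Kolmogorov complexity of a natural number `s`. -/
noncomputable def kolmogorov (s : ℕ) : ℕ∞ :=
  sInf { n : ℕ∞ | ∃ c : Nat.Partrec.Code, c.eval 0 = Part.some s ∧ n = (progLen c : ℕ∞) }

/-- Kolmogorov complexity is total (finite for every `s`, witnessed by the constant code)
but uncomputable. -/

private lemma kolmo_le {s : ℕ} {c : Nat.Partrec.Code} (hc : c.eval 0 = Part.some s) :
    kolmogorov s ≤ (progLen c : ℕ∞) :=
  sInf_le ⟨c, hc, rfl⟩

private lemma kolmo_lt_top (s : ℕ) : kolmogorov s < ⊤ :=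
  lt_of_le_of_lt (kolmo_le (Nat.Partrec.Code.eval_const s 0)) (WithTop.coe_lt_top _)

private lemma kolmo_witness {s n : ℕ} (h : kolmogorov s ≤ (n : ℕ∞)) :
    ∃ c : Nat.Partrec.Code, c.eval 0 = Part.some s ∧ progLen c ≤ n := by
  by_contra hcon
  push_neg at hcon
  have h2 : ((n + 1 : ℕ) : ℕ∞) ≤ kolmogorov s := by
    apply le_sInf
    rintro b ⟨c, hc, rfl⟩
    exact_mod_cast hcon c hc
  have := h2.trans h
  exact absurd (Nat.cast_le.1 this) (by omega)

private lemma kolmo_unbounded (n : ℕ) : ∃ s : ℕ, n < (kolmogorov s).toNat := by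
  by_contra hcon
  push_neg at hcon
  have key : ∀ s : ℕ, ∃ c : Nat.Partrec.Code, c.eval 0 = Part.some s ∧ progLen c ≤ n := by
    intro s
    apply kolmo_witness
    have h1 : kolmogorov s ≠ ⊤ := (kolmo_lt_top s).ne
    rw [← ENat.coe_toNat h1]
    exact_mod_cast hcon s
  choose g hg1 hg2 using key
  have hinj : Function.Injective g := by
    intro a b hab
    have : Part.some a = Part.some b := (hg1 a).symm.trans (hab ▸ hg1 b)
    simpa using this
  have hbound : ∀ s, Encodable.encode (g s) < 2 ^ n := fun s => Nat.size_le.1 (hg2 s)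
  have hinj2 : Function.Injective
      (fun s => (⟨Encodable.encode (g s), hbound s⟩ : Fin (2 ^ n))) := by
    intro a b hab
    exact hinj (Encodable.encode_injective (congrArg Fin.val hab))
  haveI := Finite.of_injective _ hinj2
  exact not_finite ℕ

theorem kolmogorov_lt_top_and_not_computable :
    (∀ s : ℕ, (Nat.Partrec.Code.const s).eval 0 = Part.some s ∧ kolmogorov s < ⊤) ∧
      ¬ Computable (fun s : ℕ => (kolmogorov s).toNat) := by
  refine ⟨fun s => ⟨Nat.Partrec.Code.eval_const s 0, kolmo_lt_top s⟩, ?_⟩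
  intro hK
  set h : ℕ → ℕ := fun s => (kolmogorov s).toNat with hh
  have hpow : Primrec₂ (· ^ · : ℕ → ℕ → ℕ) := Primrec₂.unpaired'.1 Nat.Primrec.pow
  -- the boolean test
  have hq : Computable₂ (fun (c : Nat.Partrec.Code) (s : ℕ) =>
      decide (2 * Encodable.encode c + 1 < 2 ^ h s)) := by
    have h1 : Computable (fun c : Nat.Partrec.Code => 2 * Encodable.encode c + 1) :=
      Primrec.to_comp <|
        Primrec.succ.comp (Primrec.nat_mul.comp (Primrec.const 2) Primrec.encode)
    have h2 : Computable (fun s : ℕ => 2 ^ h s) :=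
      (hpow.to_comp.comp (Computable.const 2) hK)
    exact Primrec.nat_lt.decide.to_comp.comp₂ (h1.comp Computable.fst).to₂
      (h2.comp Computable.snd).to₂
  -- the diagonal partial function
  have hf : Partrec₂ (fun (c : Nat.Partrec.Code) (_ : ℕ) =>
      Nat.rfind fun s => Part.some (decide (2 * Encodable.encode c + 1 < 2 ^ h s))) := by
    have hq2 : Computable₂ (fun (a : Nat.Partrec.Code × ℕ) (s : ℕ) =>
        decide (2 * Encodable.encode a.1 + 1 < 2 ^ h s)) :=
      hq.comp (Computable.fst.comp Computable.fst) Computable.snd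
    exact Partrec.rfind (Computable₂.partrec₂ hq2)
  obtain ⟨c, hc⟩ := Nat.Partrec.Code.fixed_point₂ hf
  set e : ℕ := Encodable.encode c with he
  set p : ℕ →. Bool := fun s => Part.some (decide (2 * e + 1 < 2 ^ h s)) with hp
  -- the search terminates
  obtain ⟨s₁, hs₁⟩ := kolmo_unbounded (2 * e + 1)
  have hdom : (Nat.rfind p).Dom := by
    apply Nat.rfind_dom.2
    refine ⟨s₁, ?_, fun {_} _ => trivial⟩
    simp only [hp, Part.mem_some_iff]
    exact (decide_eq_true (lt_trans hs₁ Nat.lt_two_pow_self)).symm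
  set s₀ : ℕ := (Nat.rfind p).get hdom with hs₀
  have hmem : s₀ ∈ Nat.rfind p := Part.get_mem hdom
  have hspec : 2 * e + 1 < 2 ^ h s₀ := by
    have := Nat.rfind_spec hmem
    simpa [hp] using this
  have heval : c.eval 0 = Part.some s₀ := by
    have : c.eval 0 = Nat.rfind p := congrFun hc 0
    rw [this]
    exact Part.eq_some_iff.2 hmem
  -- upper bound: K s₀ ≤ progLen c = size e
  have hub : h s₀ ≤ Nat.size e := ENat.toNat_le_of_le_coe (kolmo_le heval)
  -- lower bound: size e < h s₀
  have hlb : Nat.size e < h s₀ := by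
    rcases Nat.eq_zero_or_pos (h s₀) with h0 | hpos
    · rw [h0] at hspec; omega
    · obtain ⟨k, hk⟩ := Nat.exists_eq_add_of_lt hpos
      have hk' : h s₀ = k + 1 := by omega
      rw [hk'] at hspec
      rw [pow_succ] at hspec
      have : e < 2 ^ k := by omega
      have := Nat.size_le.2 this
      omega
  omega
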